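/- The constructions A ↦ h_A and h ↦ A_h are mutually inverse: for every discrete connection form A with D-type domain U one has A_{(h_A)}(q₀,q₁) = A(q₀,q₁) for all (q₀,q₁) ∈ U, and for every discrete horizontal lift h with domain U' one has h_{(A_h)}(q,r) = h(q,r) for all (q,r) ∈ U'. -/
import Mathlib


/-- the constructions `A ↦ h_A` and `h ↦ A_h` are mutually inverse.
First part: for a discrete connection form `A` with D-type domain `U`,
`A_{h_A}(q₀,q₁) = κ(h_{A,2}(q₀,π q₁), q₁) = A(q₀,q₁)` on `U`, where
`h_{A,2}(q₀, π q₁) = A(q₀,q')⁻¹ • q'` for any choice of `q'` over `π q₁` with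
`(q₀,q') ∈ U`.  Second part: for a discrete horizontal lift `h` with domain
`U' = (id × π)(U)`, `h_{A_h}(q,r) = (q, A_h(q,q')⁻¹ • q') = h(q,r)` on `U'`,
where `A_h(q,q') = κ(h₂(q, π q'), q')`. -/
theorem discrete_connection_form_horizontal_lift_inverse_constructions
    {G : Type*} [Group G] {P : Type*} [MulAction G P] {B : Type*}
    (π : P → B)
    (hfree : ∀ (g : G) (q : P), g • q = q → g = 1)
    (hπ : ∀ q₀ q₁ : P, π q₀ = π q₁ ↔ ∃ g : G, g • q₀ = q₁)
    (κ : P → P → G)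
    (hκ : ∀ q₀ q₁ : P, π q₀ = π q₁ → κ q₀ q₁ • q₀ = q₁)
    (U : Set (P × P))
    (hUinv : ∀ q₀ q₁ : P, (q₀, q₁) ∈ U → ∀ g₀ g₁ : G, (g₀ • q₀, g₁ • q₁) ∈ U)
    (hUvert : ∀ q₀ q₁ : P, π q₀ = π q₁ → (q₀, q₁) ∈ U)
    (U' : Set (P × B))
    (hU' : U' = {x : P × B | ∃ q₁ : P, (x.1, q₁) ∈ U ∧ π q₁ = x.2})
    -- a discrete connection form `A` with domain `U`
    (A : P → P → G)
    (hAid : ∀ q : P, A q q = 1)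
    (hAequiv : ∀ q₀ q₁ : P, (q₀, q₁) ∈ U → ∀ g₀ g₁ : G,
      A (g₀ • q₀) (g₁ • q₁) = g₁ * A q₀ q₁ * g₀⁻¹)
    -- a discrete horizontal lift `h` with domain `U'`
    (h : P → B → P × P)
    (hhequiv : ∀ q r, (q, r) ∈ U' → ∀ g : G,
      h (g • q) r = (g • (h q r).1, g • (h q r).2))
    (hhsec : ∀ q r, (q, r) ∈ U' → (h q r).1 = q ∧ π ((h q r).2) = r)
    (hhnorm : ∀ q : P, h q (π q) = (q, q)) :
    -- `A_{h_A} = A` on `U` (for every admissible choice `q'` used to define `h_A`)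
    (∀ q₀ q₁ : P, (q₀, q₁) ∈ U → ∀ q' : P, π q' = π q₁ → (q₀, q') ∈ U →
      κ ((A q₀ q')⁻¹ • q') q₁ = A q₀ q₁) ∧
    -- `h_{A_h} = h` on `U'` (for every admissible choice `q'` used to define `h_{A_h}`)
    (∀ (q : P) (r : B), (q, r) ∈ U' → ∀ q' : P, π q' = r → (q, q') ∈ U →
      h q r = (q, (κ ((h q (π q')).2) q')⁻¹ • q')) := by
  constructor
  · intro q₀ q₁ hU q' hπ' hU2
    set a := A q₀ q' with ha
    set g := κ q' q₁ with hg
    have hgq : g • q' = q₁ := hκ q' q₁ hπ'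
    have hA1 : A q₀ q₁ = g * a := by
      have := hAequiv q₀ q' hU2 1 g
      simpa [hgq, one_smul] using this
    -- π (a⁻¹ • q') = π q₁
    have hπa : π (a⁻¹ • q') = π q₁ := by
      rw [hπ]
      exact ⟨g * a, by rw [mul_smul, smul_inv_smul, hgq]⟩
    have hk := hκ _ _ hπa
    set k := κ (a⁻¹ • q') q₁ with hkdef
    have : (k * a⁻¹) • q' = (g) • q' := by
      rw [mul_smul, hk, hgq]
    have hke : k * a⁻¹ = g := by
      have h1 : (g⁻¹ * (k * a⁻¹)) • q' = q' := by
        rw [mul_smul, this, inv_smul_smul]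
      have h2 := hfree _ _ h1
      exact (inv_mul_eq_one.mp h2).symm
    rw [hA1, ← hke, inv_mul_cancel_right]
  · intro q r hU' q' hπ' hU2
    have hh := hhsec q r hU'
    subst hπ'
    have hπeq : π ((h q (π q')).2) = π q' := hh.2
    have hk := hκ _ _ hπeq
    ext
    · exact hh.1
    · simp only
      rw [eq_inv_smul_iff]
      exact hk
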